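/- The operator K satisfies K² = θ₀ (M - N) K. -/
import Mathlib


open Matrix BigOperators Finset

noncomputable section

namespace OspYangian

variable (M N : ℕ) (θ₀ : ℤ)

/-- The grading exponent `[i] ∈ {0,1}`, defined so that `(-1)^[i] = θ₀` for `i < M`
and `(-1)^[i] = -θ₀` for `M ≤ i < M+N` (0-indexed). -/
def gr (i : Fin (M + N)) : ℕ :=
  if (i : ℕ) < M then (if θ₀ = 1 then 0 else 1) else (if θ₀ = 1 then 1 else 0)

/-- The sign `θ_i`: `+1` for `i < M + N/2`, `-1` otherwise (0-indexed). -/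
def th (i : Fin (M + N)) : ℂ :=
  if (i : ℕ) < M + N / 2 then 1 else -1

/-- The conjugate index `ī`: `M+1-i` resp. `2M+N+1-i` in 1-indexed notation. -/
def bar (i : Fin (M + N)) : Fin (M + N) :=
  if _h : (i : ℕ) < M then ⟨M - 1 - (i : ℕ), by omega⟩
  else ⟨2 * M + N - 1 - (i : ℕ), by have := i.isLt; omega⟩

/-- Coefficient matrices of elements of the graded tensor square of `gl(M|N)`:
the entry at `((i,k),(j,l))` is the coefficient of `E_{ij} ⊗ E_{kl}`. -/
abbrev Mat := Matrix (Fin (M + N) × Fin (M + N)) (Fin (M + N) × Fin (M + N)) ℂ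

/-- Multiplication in the graded tensor product algebra:
`(A⊗B)(C⊗D) = (-1)^{[B][C]} AC ⊗ BD` on homogeneous elements. -/
def gmul (A B : Mat M N) : Mat M N := fun p q =>
  ∑ j : Fin (M + N), ∑ l : Fin (M + N),
    (-1 : ℂ) ^ ((gr M N θ₀ p.2 + gr M N θ₀ l) * (gr M N θ₀ j + gr M N θ₀ q.1)) *
      A p (j, l) * B (j, l) q

/-- The superpermutation `P = Σ_{i,j} (-1)^{[j]} E_{ij} ⊗ E_{ji}`. -/
def P : Mat M N := fun p q =>
  if p.1 = q.2 ∧ p.2 = q.1 then (-1 : ℂ) ^ gr M N θ₀ p.2 else 0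

/-- `K = Σ_{i,j} (-1)^{[i][j]} θ_i θ_j E_{j̄ ī} ⊗ E_{ji}`. -/
def K : Mat M N := fun p q =>
  if p.1 = bar M N p.2 ∧ q.1 = bar M N q.2 then
    (-1 : ℂ) ^ (gr M N θ₀ q.2 * gr M N θ₀ p.2) * th M N q.2 * th M N p.2
  else 0

lemma gr_zero_or_one (i : Fin (M + N)) : gr M N θ₀ i = 0 ∨ gr M N θ₀ i = 1 := by
  unfold gr; split <;> split <;> simp

lemma gr_mul_self (i : Fin (M + N)) : gr M N θ₀ i * gr M N θ₀ i = gr M N θ₀ i := by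
  rcases gr_zero_or_one M N θ₀ i with h | h <;> simp [h]

lemma bar_lt (l : Fin (M + N)) : ((bar M N l : Fin (M + N)) : ℕ) < M ↔ (l : ℕ) < M := by
  have := l.isLt
  unfold bar; split_ifs with h <;> simp <;> omega

lemma gr_bar (l : Fin (M + N)) : gr M N θ₀ (bar M N l) = gr M N θ₀ l := by
  unfold gr
  by_cases h : (l : ℕ) < M
  · rw [if_pos h, if_pos ((bar_lt M N l).mpr h)]
  · rw [if_neg h, if_neg (fun hc => h ((bar_lt M N l).mp hc))]

lemma th_mul_self (l : Fin (M + N)) : th M N l * th M N l = 1 := by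
  unfold th; split <;> norm_num

lemma sum_if_lt (a b : ℂ) :
    ∑ i ∈ Finset.range (M + N), (if i < M then a else b) = (M : ℂ) * a + (N : ℂ) * b := by
  rw [Finset.sum_ite]
  have h1 : (Finset.range (M + N)).filter (fun i => i < M) = Finset.range M := by
    ext i; simp; omega
  have h2 : (Finset.range (M + N)).filter (fun i => ¬ i < M) = Finset.Ico M (M + N) := by
    ext i; simp; omega
  rw [h1, h2, Finset.sum_const, Finset.sum_const, Finset.card_range, Nat.card_Ico,
    Nat.add_sub_cancel_left, nsmul_eq_mul, nsmul_eq_mul]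

lemma sum_neg_one_pow_gr (hθ : θ₀ = 1 ∨ θ₀ = -1) :
    ∑ l : Fin (M + N), ((-1 : ℂ)) ^ gr M N θ₀ l = (θ₀ : ℂ) * ((M : ℂ) - (N : ℂ)) := by
  have key : ∑ l : Fin (M + N), ((-1 : ℂ)) ^ gr M N θ₀ l
      = ∑ i ∈ Finset.range (M + N),
          (if i < M then ((-1 : ℂ)) ^ (if θ₀ = 1 then 0 else 1)
            else ((-1 : ℂ)) ^ (if θ₀ = 1 then 1 else 0)) := by
    rw [Finset.sum_range fun i => _]
    · apply Finset.sum_congr rfl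
      intro l _
      unfold gr
      split <;> rfl
  rw [key, sum_if_lt]
  rcases hθ with h | h <;> subst h <;> simp <;> ring

/-- `K² = θ₀ (M - N) K` in the graded tensor product algebra. -/
theorem statement2 (hθ : θ₀ = 1 ∨ θ₀ = -1) (hN : Even N) :
    gmul M N θ₀ (K M N θ₀) (K M N θ₀) = ((θ₀ : ℂ) * ((M : ℂ) - (N : ℂ))) • K M N θ₀ := by
  funext p q
  obtain ⟨p1, p2⟩ := p
  obtain ⟨q1, q2⟩ := q
  rw [Matrix.smul_apply, smul_eq_mul]
  by_cases hp : p1 = bar M N p2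
  swap
  · simp [gmul, K, hp]
  by_cases hq : q1 = bar M N q2
  swap
  · simp [gmul, K, hq]
  simp only [gmul, K, hp, hq, true_and, and_true, if_true]
  rw [Finset.sum_comm]
  have hterm : ∀ l : Fin (M + N),
      (∑ j : Fin (M + N),
        (-1 : ℂ) ^ ((gr M N θ₀ p2 + gr M N θ₀ l) * (gr M N θ₀ j + gr M N θ₀ (bar M N q2))) *
          (if j = bar M N l then
            (-1 : ℂ) ^ (gr M N θ₀ l * gr M N θ₀ p2) * th M N l * th M N p2 else 0) *
          (if j = bar M N l then
            (-1 : ℂ) ^ (gr M N θ₀ q2 * gr M N θ₀ l) * th M N q2 * th M N l else 0))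
      = ((-1 : ℂ) ^ (gr M N θ₀ q2 * gr M N θ₀ p2) * th M N q2 * th M N p2)
          * ((-1 : ℂ)) ^ gr M N θ₀ l := by
    intro l
    rw [Finset.sum_eq_single (bar M N l)]
    · rw [if_pos rfl, if_pos rfl, gr_bar, gr_bar]
      set a := gr M N θ₀ p2
      set b := gr M N θ₀ q2
      set c := gr M N θ₀ l
      have hc : c * c = c := gr_mul_self M N θ₀ l
      have hexp : (a + c) * (c + b) + (c * a + b * c) = b * a + c + 2 * (a * c + b * c) := by
        have h0 : (a + c) * (c + b) + (c * a + b * c) = b * a + c * c + 2 * (a * c + b * c) := by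
          ring
        rw [h0, hc]
      have hpow : (-1 : ℂ) ^ ((a + c) * (c + b)) * ((-1 : ℂ) ^ (c * a) * (-1 : ℂ) ^ (b * c))
          = (-1 : ℂ) ^ (b * a) * (-1 : ℂ) ^ c := by
        rw [← pow_add, ← pow_add, hexp, pow_add, pow_add, pow_mul]
        norm_num
      have ht := th_mul_self M N l
      calc (-1 : ℂ) ^ ((a + c) * (c + b)) *
            ((-1 : ℂ) ^ (c * a) * th M N l * th M N p2) *
            ((-1 : ℂ) ^ (b * c) * th M N q2 * th M N l)
          = ((-1 : ℂ) ^ ((a + c) * (c + b)) * ((-1 : ℂ) ^ (c * a) * (-1 : ℂ) ^ (b * c)))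
              * (th M N l * th M N l) * (th M N p2 * th M N q2) := by ring
        _ = ((-1 : ℂ) ^ (b * a) * (-1 : ℂ) ^ c) * 1 * (th M N p2 * th M N q2) := by
              rw [hpow, ht]
        _ = (-1 : ℂ) ^ (b * a) * th M N q2 * th M N p2 * (-1 : ℂ) ^ c := by ring
    · intro j _ hj
      rw [if_neg hj]
      ring
    · intro h
      exact absurd (Finset.mem_univ _) h
  calc ∑ l : Fin (M + N), ∑ j : Fin (M + N),
        (-1 : ℂ) ^ ((gr M N θ₀ p2 + gr M N θ₀ l) * (gr M N θ₀ j + gr M N θ₀ (bar M N q2))) *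
          (if j = bar M N l then
            (-1 : ℂ) ^ (gr M N θ₀ l * gr M N θ₀ p2) * th M N l * th M N p2 else 0) *
          (if j = bar M N l then
            (-1 : ℂ) ^ (gr M N θ₀ q2 * gr M N θ₀ l) * th M N q2 * th M N l else 0)
      = ∑ l : Fin (M + N),
          ((-1 : ℂ) ^ (gr M N θ₀ q2 * gr M N θ₀ p2) * th M N q2 * th M N p2)
            * ((-1 : ℂ)) ^ gr M N θ₀ l :=
        Finset.sum_congr rfl fun l _ => hterm l
    _ = ((-1 : ℂ) ^ (gr M N θ₀ q2 * gr M N θ₀ p2) * th M N q2 * th M N p2)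
          * ∑ l : Fin (M + N), ((-1 : ℂ)) ^ gr M N θ₀ l := by rw [← Finset.mul_sum]
    _ = (θ₀ : ℂ) * ((M : ℂ) - (N : ℂ)) *
          ((-1 : ℂ) ^ (gr M N θ₀ q2 * gr M N θ₀ p2) * th M N q2 * th M N p2) := by
        rw [sum_neg_one_pow_gr M N θ₀ hθ]; ring
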